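/- In dimension n = 1 let A⁺ = {0, 2}, A⁻ = {1}, and consider the coefficient vector v with v_0 = 1, v_1 = −2, v_2 = 1, whose exponential sum is f(x) = 1 − 2·eˣ + e^{2x}. Then f(x) ≥ 0 for all x ∈ ℝ (indeed f(x) = (eˣ − 1)²), and in particular v ∈ C_{(A⁺,A⁻)}; however, v ∉ D_{(A⁺,A⁻)}: for λ ∈ Λ(A⁺,1) given by λ_0 = λ_2 = 1/2 one has |v_1| = 2 > 1 = v_0^{1/2}·v_2^{1/2}. Consequently the inclusion of D_{(A⁺,A⁻)} in the set of coefficient vectors of nonnegative exponential sums is strict. -/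

import Mathlib

open Finset

/-- The exponential sum with support `A ⊆ ℝ` (dimension `n = 1`) and coefficients `v`. -/
noncomputable def expSum1 (A : Finset ℝ) (v : ℝ → ℝ) (x : ℝ) : ℝ :=
  ∑ γ ∈ A, v γ * Real.exp (x * γ)

/-- The signed SONC (= SAGE) cone `C_{(A⁺,A⁻)}` in dimension one. -/
def InSAGE1 (Ap An : Finset ℝ) (c : ℝ → ℝ) : Prop :=
  (∀ α ∈ Ap, 0 ≤ c α) ∧ (∀ β ∈ An, c β ≤ 0) ∧
  ∃ (m : ℕ) (d : Fin m → ℝ → ℝ),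
    (∀ γ ∈ Ap ∪ An, c γ = ∑ i, d i γ) ∧
    (∀ i, ∀ γ₁ ∈ Ap ∪ An, ∀ γ₂ ∈ Ap ∪ An, d i γ₁ < 0 → d i γ₂ < 0 → γ₁ = γ₂) ∧
    (∀ i, ∀ x : ℝ, 0 ≤ expSum1 (Ap ∪ An) (d i) x)

/-- `Λ(A⁺, β)` in dimension one. -/
def IsBary1 (Ap : Finset ℝ) (β : ℝ) (lam : ℝ → ℝ) : Prop :=
  (∀ α ∈ Ap, 0 ≤ lam α) ∧ (∑ α ∈ Ap, lam α = 1) ∧ (∑ α ∈ Ap, lam α * α = β)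

/-- The set `D_{(A⁺,A⁻)}` cut out by the weighted geometric-mean inequalities. -/
def InDual1 (Ap An : Finset ℝ) (v : ℝ → ℝ) : Prop :=
  (∀ α ∈ Ap, 0 ≤ v α) ∧
  ∀ β ∈ An, ∀ lam : ℝ → ℝ, IsBary1 Ap β lam → |v β| ≤ ∏ α ∈ Ap, v α ^ lam α


lemma keyquad (w0 w1 w2 s : ℝ) (h0 : 0 ≤ w0) (h2 : 0 ≤ w2) (hs : 0 < s)
    (h1 : |w1| ≤ Real.sqrt w0 * Real.sqrt w2) : 0 ≤ w0 + w1 * s + w2 * s ^ 2 := by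
  have ha := Real.sq_sqrt h0
  have hb := Real.sq_sqrt h2
  have hab := abs_le.mp h1
  nlinarith [sq_nonneg (Real.sqrt w0 - Real.sqrt w2 * s), Real.sqrt_nonneg w0,
    Real.sqrt_nonneg w2, mul_pos hs hs]

lemma lamhalf_bary : IsBary1 {0, 2} 1
    (fun t => if t = 0 then (1/2 : ℝ) else if t = 2 then 1/2 else 0) := by
  refine ⟨?_, ?_, ?_⟩
  · intro a ha
    simp only [Finset.mem_insert, Finset.mem_singleton] at ha
    rcases ha with rfl | rfl <;> norm_num
  · norm_num
  · norm_num

lemma prodhalf (w : ℝ → ℝ) :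
    (∏ α ∈ ({0, 2} : Finset ℝ), w α ^ (if α = 0 then (1/2 : ℝ) else if α = 2 then 1/2 else 0))
      = w 0 ^ (1/2 : ℝ) * w 2 ^ (1/2 : ℝ) := by
  rw [Finset.prod_insert (by norm_num), Finset.prod_singleton]
  norm_num

lemma union_eq : ({0, 2} : Finset ℝ) ∪ {1} = {0, 1, 2} := by
  ext a; simp; tauto

lemma dual_subset (w : ℝ → ℝ) (hw : InDual1 {0, 2} {1} w) :
    ∀ x : ℝ, 0 ≤ expSum1 {0, 1, 2} w x := by
  intro x
  obtain ⟨hpos, hineq⟩ := hw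
  have h0 : 0 ≤ w 0 := hpos 0 (by norm_num)
  have h2 : 0 ≤ w 2 := hpos 2 (by norm_num)
  have hb := hineq 1 (by norm_num) _ lamhalf_bary
  rw [prodhalf] at hb
  rw [← Real.sqrt_eq_rpow, ← Real.sqrt_eq_rpow] at hb
  have hsum : expSum1 {0, 1, 2} w x
      = w 0 + w 1 * Real.exp x + w 2 * (Real.exp x) ^ 2 := by
    rw [expSum1, Finset.sum_insert (by norm_num), Finset.sum_insert (by norm_num),
      Finset.sum_singleton]
    rw [show x * 2 = x + x by ring, Real.exp_add]
    simp [Real.exp_zero]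
    ring
  rw [hsum]
  exact keyquad _ _ _ _ h0 h2 (Real.exp_pos x) hb

/-- For `f(x) = 1 − 2eˣ + e^{2x} = (eˣ−1)²` with `A⁺ = {0,2}`, `A⁻ = {1}`,
the coefficient vector lies in the primal signed SONC cone but not in `D_{(A⁺,A⁻)}`;
hence the inclusion of `D_{(A⁺,A⁻)}` in the nonnegativity cone is strict. -/
theorem dual_strictly_smaller_than_nonneg :
    let v : ℝ → ℝ := fun t => if t = 1 then -2 else if t = 0 then 1 else if t = 2 then 1 else 0
    (∀ x : ℝ, expSum1 {0, 1, 2} v x = (Real.exp x - 1) ^ 2) ∧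
    (∀ x : ℝ, 0 ≤ expSum1 {0, 1, 2} v x) ∧
    InSAGE1 {0, 2} {1} v ∧
    ¬ InDual1 {0, 2} {1} v ∧
    {w : ℝ → ℝ | InDual1 {0, 2} {1} w}
      ⊂ {w : ℝ → ℝ | ∀ x : ℝ, 0 ≤ expSum1 {0, 1, 2} w x} := by
  intro v
  have heq : ∀ x : ℝ, expSum1 {0, 1, 2} v x = (Real.exp x - 1) ^ 2 := by
    intro x
    rw [expSum1, Finset.sum_insert (by norm_num), Finset.sum_insert (by norm_num),
      Finset.sum_singleton]
    simp only [v]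
    norm_num
    rw [show x * 2 = x + x by ring, Real.exp_add]
    ring
  have hnn : ∀ x : ℝ, 0 ≤ expSum1 {0, 1, 2} v x := by
    intro x; rw [heq]; positivity
  have hnotdual : ¬ InDual1 {0, 2} {1} v := by
    rintro ⟨-, hineq⟩
    have hb := hineq 1 (by norm_num) _ lamhalf_bary
    rw [prodhalf] at hb
    simp only [v] at hb
    norm_num [Real.one_rpow] at hb
  refine ⟨heq, hnn, ?_, hnotdual, ?_⟩
  · refine ⟨?_, ?_, 1, fun _ => v, ?_, ?_, ?_⟩
    · intro a ha
      simp only [Finset.mem_insert, Finset.mem_singleton] at ha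
      rcases ha with rfl | rfl <;> norm_num [v]
    · intro b hb
      simp only [Finset.mem_singleton] at hb
      subst hb; norm_num [v]
    · intro γ _; simp
    · intro i γ₁ h₁ γ₂ h₂ hn₁ hn₂
      rw [union_eq] at h₁ h₂
      simp only [Finset.mem_insert, Finset.mem_singleton] at h₁ h₂
      rcases h₁ with rfl | rfl | rfl <;> rcases h₂ with rfl | rfl | rfl <;>
        norm_num [v] at *
    · intro i x
      rw [union_eq]
      exact hnn x
  · rw [Set.ssubset_def]
    exact ⟨fun w hw => dual_subset w hw, fun hsub => hnotdual (hsub hnn)⟩
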